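/- (Exchange lemma, compute-to-memory) Let x be a feasible allocation for ratio R, and suppose there exist a compute-bound operation j ∈ F_comp with x_j > 0 and a memory-bound operation k ∈ F_mem (k ≠ j) with x_k < B_h/(B_h+B_g). Then x is not optimal: there exists a feasible allocation x' for the same ratio R with L(x') < L(x). -/

import Mathlib

open Finset

/-- Offloading model: a finite nonempty set of operations `F` partitioned into
memory-bound operations `Fmem` and compute-bound operations `Fcomp`; host-GPU
interconnect bandwidth `Bh > 0`, GPU memory bandwidth `Bg > 0`, per-operation
compute bandwidths `Bi i ≥ Bh` (for compute-bound ops) and data sizes `Cd i > 0`. -/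
structure OffloadModel (ι : Type*) [DecidableEq ι] where
  F : Finset ι
  Fmem : Finset ι
  Fcomp : Finset ι
  Bh : ℝ
  Bg : ℝ
  Bi : ι → ℝ
  Cd : ι → ℝ
  hF : F.Nonempty
  hpart : Fmem ∪ Fcomp = F
  hdisj : Disjoint Fmem Fcomp
  hBh : 0 < Bh
  hBg : 0 < Bg
  hBi : ∀ i ∈ Fcomp, Bh ≤ Bi i
  hC : ∀ i ∈ F, 0 < Cd i

variable {ι : Type*} [DecidableEq ι]

/-- Latency of operation `i` under per-operation offloading ratio `x`. -/
noncomputable def OffloadModel.T (M : OffloadModel ι) (i : ι) (x : ℝ) : ℝ :=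
  if i ∈ M.Fmem then M.Cd i * max (x / M.Bh) ((1 - x) / M.Bg)
  else M.Cd i * max (1 / M.Bi i) (x / M.Bh)

/-- Turning point of operation `i`. -/
noncomputable def OffloadModel.turning (M : OffloadModel ι) (i : ι) : ℝ :=
  if i ∈ M.Fmem then M.Bh / (M.Bh + M.Bg) else M.Bh / M.Bi i

/-- An allocation `x` is feasible for global offloading ratio `R`. -/
def OffloadModel.Feasible (M : OffloadModel ι) (R : ℝ) (x : ι → ℝ) : Prop :=
  (∀ i ∈ M.F, 0 ≤ x i ∧ x i ≤ 1) ∧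
  ∑ i ∈ M.F, M.Cd i * x i = R * ∑ i ∈ M.F, M.Cd i

/-- The objective: total latency of an allocation. -/
noncomputable def OffloadModel.L (M : OffloadModel ι) (x : ι → ℝ) : ℝ :=
  ∑ i ∈ M.F, M.T i (x i)

/-- A feasible allocation is optimal if it minimizes the objective among all
feasible allocations. -/
def OffloadModel.Optimal (M : OffloadModel ι) (R : ℝ) (x : ι → ℝ) : Prop :=
  M.Feasible R x ∧ ∀ y, M.Feasible R y → M.L x ≤ M.L y

/-- Exchange lemma (compute-to-memory): if a feasible allocation `x` offloads a
positive amount from a compute-bound operation `j` while some memory-bound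
operation `k ≠ j` is strictly below its turning point, then `x` is not optimal:
some feasible allocation `x'` for the same ratio has strictly smaller objective. -/
theorem stmt10 (M : OffloadModel ι) (R : ℝ) (hR0 : 0 ≤ R) (hR1 : R ≤ 1)
    (x : ι → ℝ) (hx : M.Feasible R x)
    (j k : ι) (hj : j ∈ M.Fcomp) (hk : k ∈ M.Fmem) (hjk : k ≠ j)
    (hxj : 0 < x j) (hxk : x k < M.Bh / (M.Bh + M.Bg)) :
    ¬ M.Optimal R x ∧ ∃ x', M.Feasible R x' ∧ M.L x' < M.L x := by
  have hjF : j ∈ M.F := M.hpart ▸ Finset.mem_union_right _ hj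
  have hkF : k ∈ M.F := M.hpart ▸ Finset.mem_union_left _ hk
  have hjmem : j ∉ M.Fmem := fun h => Finset.disjoint_left.mp M.hdisj h hj
  have hCj : 0 < M.Cd j := M.hC j hjF
  have hCk : 0 < M.Cd k := M.hC k hkF
  have hBh := M.hBh
  have hBg := M.hBg
  set t : ℝ := M.Bh / (M.Bh + M.Bg) with ht
  have hBhg : 0 < M.Bh + M.Bg := by linarith
  have ht1 : t < 1 := by rw [ht, div_lt_one hBhg]; linarith
  set δk : ℝ := min (t - x k) (x j * M.Cd j / M.Cd k) with hδk
  have hδkpos : 0 < δk := lt_min (by linarith) (by positivity)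
  set δj : ℝ := δk * M.Cd k / M.Cd j with hδj
  have hδjpos : 0 < δj := by positivity
  have hδjle : δj ≤ x j := by
    have h1 : δk ≤ x j * M.Cd j / M.Cd k := min_le_right _ _
    rw [hδj, div_le_iff₀ hCj]
    calc δk * M.Cd k ≤ (x j * M.Cd j / M.Cd k) * M.Cd k :=
          mul_le_mul_of_nonneg_right h1 hCk.le
      _ = x j * M.Cd j := by field_simp
  have hδklet : x k + δk ≤ t := by
    have := min_le_left (t - x k) (x j * M.Cd j / M.Cd k)
    linarith [this]
  have hbal : M.Cd j * δj = M.Cd k * δk := by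
    rw [hδj]; field_simp
  set x' : ι → ℝ := Function.update (Function.update x j (x j - δj)) k (x k + δk) with hx'
  have hx'k : x' k = x k + δk := by simp [hx']
  have hx'j : x' j = x j - δj := by
    simp [hx', Function.update_of_ne hjk.symm]
  have hx'off : ∀ i, i ≠ j → i ≠ k → x' i = x i := by
    intro i hij hik
    simp [hx', Function.update_of_ne hik, Function.update_of_ne hij]
  have hjmem' : j ∈ M.F.erase k := Finset.mem_erase.mpr ⟨fun h => hjk h.symm, hjF⟩
  have key : ∀ (g : ι → ℝ),
      ∑ i ∈ M.F, g i
        = g k + (g j + ∑ i ∈ (M.F.erase k).erase j, g i) := by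
    intro g
    rw [← Finset.add_sum_erase _ _ hkF, ← Finset.add_sum_erase _ _ hjmem']
  have restcongr : ∀ (h : ι → ℝ → ℝ),
      ∑ i ∈ (M.F.erase k).erase j, h i (x' i) = ∑ i ∈ (M.F.erase k).erase j, h i (x i) := by
    intro h
    refine Finset.sum_congr rfl (fun i hi => ?_)
    have hij : i ≠ j := (Finset.mem_erase.mp hi).1
    have hik : i ≠ k := (Finset.mem_erase.mp (Finset.mem_erase.mp hi).2).1
    rw [hx'off i hij hik]
  clear_value t δk δj x'
  obtain ⟨hbnd, hsum⟩ := hx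
  have hfeas : M.Feasible R x' := by
    constructor
    · intro i hiF
      by_cases hik : i = k
      · subst hik
        rw [hx'k]
        exact ⟨by linarith [(hbnd i hiF).1], by linarith [hδklet, ht1]⟩
      · by_cases hij : i = j
        · subst hij
          rw [hx'j]
          exact ⟨by linarith, by linarith [(hbnd i hiF).2]⟩
        · rw [hx'off i hij hik]; exact hbnd i hiF
    · have e1 := key (fun i => M.Cd i * x' i)
      have e2 := key (fun i => M.Cd i * x i)
      have e3 := restcongr (fun i v => M.Cd i * v)
      rw [e1, hx'k, hx'j, e3, ← hsum, e2]
      linarith [hbal, mul_add (M.Cd k) (x k) δk, mul_sub (M.Cd j) (x j) δj]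
  have hTk : M.T k (x k + δk) < M.T k (x k) := by
    have hmax : ∀ v : ℝ, v ≤ t → max (v / M.Bh) ((1 - v) / M.Bg) = (1 - v) / M.Bg := by
      intro v hv
      have hv' : v * (M.Bh + M.Bg) ≤ M.Bh := (le_div_iff₀ hBhg).mp (ht ▸ hv)
      apply max_eq_right
      rw [div_le_div_iff₀ hBh hBg]
      nlinarith
    rw [OffloadModel.T, if_pos hk, OffloadModel.T, if_pos hk,
      hmax _ hδklet, hmax _ (le_of_lt hxk)]
    have : (1 - (x k + δk)) / M.Bg < (1 - x k) / M.Bg := by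
      gcongr
      linarith
    exact mul_lt_mul_of_pos_left this hCk
  have hTj : M.T j (x j - δj) ≤ M.T j (x j) := by
    rw [OffloadModel.T, if_neg hjmem, OffloadModel.T, if_neg hjmem]
    have : (x j - δj) / M.Bh ≤ x j / M.Bh := by
      gcongr
      linarith
    exact mul_le_mul_of_nonneg_left (max_le_max le_rfl this) hCj.le
  have hL : M.L x' < M.L x := by
    rw [OffloadModel.L, OffloadModel.L]
    have e1 := key (fun i => M.T i (x' i))
    have e2 := key (fun i => M.T i (x i))
    have e3 := restcongr M.T
    rw [e1, hx'k, hx'j, e3, e2]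
    linarith
  exact ⟨fun hopt => absurd (hopt.2 x' hfeas) (not_le.mpr hL), x', hfeas, hL⟩
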